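/- The formal power series Π(x) = Σ_{N≥0} c_N x^N ∈ ℚ[[x]] satisfies the Picard–Fuchs differential equation {θ³ + 36x²(θ+1)(2θ+1)(2θ+3) − 2x(2θ+1)(10θ² + 10θ + 3)} Π(x) = 0, where θ = x·d/dx. Equivalently, c₀ = 1, c₁ = 6·c₀, and for all N ≥ 2 the coefficients satisfy the recursion N³·c_N = 2(2N−1)(10N² − 10N + 3)·c_{N−1} − 36(N−1)(2N−1)(2N−3)·c_{N−2}. -/

import Mathlib

open scoped Nat

/-- The coefficients `c_N = Σ_{k+l+m=N} (2N)!/((k!)²(l!)²(m!)²)` of the period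
integral `Π(x) = Σ c_N x^N` of the mirror family of degree-12 K3 surfaces. -/
def periodCoeff (N : ℕ) : ℚ :=
  ∑ p ∈ Finset.Nat.antidiagonalTuple 3 N,
    ((2 * N)! : ℚ) / (((p 0)! ^ 2 * (p 1)! ^ 2 * (p 2)! ^ 2 : ℕ) : ℚ)

def bb (n j : ℕ) : ℚ :=
  if j ≤ n then (((2*n)! * (2*j)! : ℕ) : ℚ) / (((j ! ^ 4 * (n - j)! ^ 2 : ℕ)) : ℚ) else 0

noncomputable def gg (n j : ℕ) : ℚ := ((j:ℚ)^3 * (3*(j:ℚ) - 4*(n:ℚ))) * bb n j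

lemma fac_cast_ne (m : ℕ) : ((m ! : ℕ) : ℚ) ≠ 0 :=
  Nat.cast_ne_zero.mpr (Nat.factorial_ne_zero m)

lemma cert (n j : ℕ) (hn : 2 ≤ n) (hj : j ≤ n) :
    (n:ℚ)^4 * bb n j
      - (n:ℚ) * (2*(2*(n:ℚ)-1)*(10*(n:ℚ)^2-10*(n:ℚ)+3)) * bb (n-1) j
      + (n:ℚ) * (36*((n:ℚ)-1)*(2*(n:ℚ)-1)*(2*(n:ℚ)-3)) * bb (n-2) j
    = gg n (j+1) - gg n j := by
  rcases Nat.lt_or_ge j (n-1) with hc | hc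
  · -- j + 2 ≤ n
    obtain ⟨e, rfl⟩ : ∃ e, n = j + e + 2 := ⟨n - j - 2, by omega⟩
    have h1 : j + e + 2 - 1 = j + e + 1 := by omega
    have h2 : j + e + 2 - 2 = j + e := by omega
    rw [h1, h2]
    have hb0 : bb (j+e+2) j
        = (((2*(j+e))! : ℚ) * ((2*(j:ℚ)+2*(e:ℚ)+1)*(2*(j:ℚ)+2*(e:ℚ)+2)*(2*(j:ℚ)+2*(e:ℚ)+3)*(2*(j:ℚ)+2*(e:ℚ)+4)) * ((2*j)! : ℚ))
          / (((j !:ℕ) : ℚ)^4 * (((e !:ℕ) : ℚ)*((e:ℚ)+1)*((e:ℚ)+2))^2) := by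
      rw [bb, if_pos (by omega), show 2*(j+e+2) = 2*(j+e)+4 by ring,
        show j+e+2-j = e+2 by omega]
      push_cast [Nat.factorial_succ]
      ring
    have hb1 : bb (j+e+1) j
        = (((2*(j+e))! : ℚ) * ((2*(j:ℚ)+2*(e:ℚ)+1)*(2*(j:ℚ)+2*(e:ℚ)+2)) * ((2*j)! : ℚ))
          / (((j !:ℕ) : ℚ)^4 * (((e !:ℕ) : ℚ)*((e:ℚ)+1))^2) := by
      rw [bb, if_pos (by omega), show 2*(j+e+1) = 2*(j+e)+2 by ring,
        show j+e+1-j = e+1 by omega]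
      push_cast [Nat.factorial_succ]
      ring
    have hb2 : bb (j+e) j
        = (((2*(j+e))! : ℚ) * ((2*j)! : ℚ)) / (((j !:ℕ) : ℚ)^4 * ((e !:ℕ) : ℚ)^2) := by
      rw [bb, if_pos (by omega), show j+e-j = e by omega]
      push_cast
      ring
    have hb3 : bb (j+e+2) (j+1)
        = (((2*(j+e))! : ℚ) * ((2*(j:ℚ)+2*(e:ℚ)+1)*(2*(j:ℚ)+2*(e:ℚ)+2)*(2*(j:ℚ)+2*(e:ℚ)+3)*(2*(j:ℚ)+2*(e:ℚ)+4)) * (((2*j)! : ℚ)*((2*(j:ℚ)+1)*(2*(j:ℚ)+2)))) / ((((j !:ℕ) : ℚ)*((j:ℚ)+1))^4 * (((e !:ℕ) : ℚ)*((e:ℚ)+1))^2) := by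
      rw [bb, if_pos (by omega), show 2*(j+e+2) = 2*(j+e)+4 by ring,
        show 2*(j+1) = 2*j+2 by ring, show j+e+2-(j+1) = e+1 by omega]
      push_cast [Nat.factorial_succ]
      ring
    rw [gg, gg, hb0, hb1, hb2, hb3]
    have hz := fac_cast_ne j
    have hw := fac_cast_ne e
    have hJ : ((j:ℚ)+1) ≠ 0 := by positivity
    have hE1 : ((e:ℚ)+1) ≠ 0 := by positivity
    have hE2 : ((e:ℚ)+2) ≠ 0 := by positivity
    push_cast
    field_simp
    ring
  · rcases Nat.lt_or_ge j n with hc2 | hc2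
    · -- j = n - 1
      obtain ⟨m, rfl⟩ : ∃ m, n = m + 1 := ⟨n - 1, by omega⟩
      have hjm : j = m := by omega
      subst hjm
      have hm1 : 1 ≤ j := by omega
      have h1 : j + 1 - 1 = j := by omega
      have h2 : j + 1 - 2 = j - 1 := by omega
      rw [h1, h2]
      have hb2 : bb (j-1) j = 0 := by rw [bb, if_neg (by omega)]
      have hb0 : bb (j+1) j
          = (((2*j)! : ℚ) * ((2*(j:ℚ)+1)*(2*(j:ℚ)+2)) * ((2*j)! : ℚ))
            / (((j !:ℕ) : ℚ)^4) := by
        rw [bb, if_pos (by omega), show 2*(j+1) = 2*j+2 by ring,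
          show j+1-j = 1 by omega]
        push_cast [Nat.factorial_succ, Nat.factorial_zero]
        norm_num
        ring
      have hb1 : bb j j = (((2*j)! : ℚ) * ((2*j)! : ℚ)) / (((j !:ℕ) : ℚ)^4) := by
        rw [bb, if_pos le_rfl, Nat.sub_self]
        push_cast [Nat.factorial_zero]
        norm_num
      have hb3 : bb (j+1) (j+1)
          = ((((2*j)! : ℚ) * ((2*(j:ℚ)+1)*(2*(j:ℚ)+2)))^2)
            / ((((j !:ℕ) : ℚ)*((j:ℚ)+1))^4) := by
        rw [bb, if_pos le_rfl, Nat.sub_self, show 2*(j+1) = 2*j+2 by ring]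
        push_cast [Nat.factorial_succ, Nat.factorial_zero]
        norm_num
        ring
      rw [gg, gg, hb0, hb1, hb2, hb3]
      have hz := fac_cast_ne j
      have hJ : ((j:ℚ)+1) ≠ 0 := by positivity
      push_cast
      field_simp
      ring
    · -- j = n
      have hjn : j = n := by omega
      subst hjn
      have hb1 : bb (j-1) j = 0 := by rw [bb, if_neg (by omega)]
      have hb2 : bb (j-2) j = 0 := by rw [bb, if_neg (by omega)]
      have hb3 : bb j (j+1) = 0 := by rw [bb, if_neg (by omega)]
      rw [gg, gg, hb1, hb2, hb3]
      ring

lemma bb_of_gt {n j : ℕ} (h : n < j) : bb n j = 0 := by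
  simp [bb, Nat.not_le.mpr h]

lemma sum_adt3 {M : Type*} [AddCommMonoid M] (f : ℕ → ℕ → ℕ → M) (N : ℕ) :
    ∑ p ∈ Finset.Nat.antidiagonalTuple 3 N, f (p 0) (p 1) (p 2)
      = ∑ p ∈ Finset.HasAntidiagonal.antidiagonal N, ∑ q ∈ Finset.HasAntidiagonal.antidiagonal p.2, f p.1 q.1 q.2 := by
  rw [← Finset.sum_sigma (Finset.HasAntidiagonal.antidiagonal N) (fun p => Finset.HasAntidiagonal.antidiagonal p.2)
      (fun x => f x.1.1 x.2.1 x.2.2)]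
  refine Finset.sum_nbij' (i := fun p => ⟨(p 0, p 1 + p 2), (p 1, p 2)⟩)
    (j := fun q => ![q.1.1, q.2.1, q.2.2]) ?_ ?_ ?_ ?_ ?_
  · intro p hp
    rw [Finset.Nat.mem_antidiagonalTuple, Fin.sum_univ_three] at hp
    simp [Finset.mem_sigma, Finset.HasAntidiagonal.mem_antidiagonal, ← hp, add_assoc]
  · intro q hq
    simp only [Finset.mem_sigma, Finset.HasAntidiagonal.mem_antidiagonal] at hq
    rw [Finset.Nat.mem_antidiagonalTuple, Fin.sum_univ_three]
    simp only [Matrix.cons_val_zero, Matrix.cons_val_one, Matrix.head_cons,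
      Matrix.cons_val_two, Matrix.tail_cons]
    omega
  · intro p hp
    funext i
    fin_cases i <;> rfl
  · intro q hq
    simp only [Finset.mem_sigma, Finset.HasAntidiagonal.mem_antidiagonal] at hq
    ext <;> simp [hq.2]
  · intro p hp
    rfl

lemma innerSumVdm (r : ℕ) :
    ∑ q ∈ Finset.HasAntidiagonal.antidiagonal r, (1:ℚ)/((q.1)! ^ 2 * (q.2)! ^ 2)
      = ((2*r)! : ℚ)/((r ! : ℚ)^4) := by
  have hv := Nat.add_choose_eq r r r
  have hcast : (((r+r).choose r : ℕ) : ℚ)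
      = ∑ q ∈ Finset.HasAntidiagonal.antidiagonal r, ((r.choose q.1 : ℚ) * (r.choose q.2 : ℚ)) := by
    exact_mod_cast congrArg (Nat.cast : ℕ → ℚ) hv
  have hfac : (r ! : ℚ) ≠ 0 := Nat.cast_ne_zero.mpr (Nat.factorial_ne_zero r)
  have key : ∀ q ∈ Finset.HasAntidiagonal.antidiagonal r,
      (1:ℚ)/((q.1)! ^ 2 * (q.2)! ^ 2)
        = ((r.choose q.1 : ℚ) * (r.choose q.2 : ℚ)) / ((r ! : ℚ)^2) := by
    intro q hq
    rw [Finset.HasAntidiagonal.mem_antidiagonal] at hq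
    have h1 : q.1 ≤ r := by omega
    have h2 : q.2 ≤ r := by omega
    have e1 : r - q.1 = q.2 := by omega
    have e2 : r - q.2 = q.1 := by omega
    rw [Nat.cast_choose ℚ h1, Nat.cast_choose ℚ h2, e1, e2]
    have n1 : ((q.1)! : ℚ) ≠ 0 := Nat.cast_ne_zero.mpr (Nat.factorial_ne_zero _)
    have n2 : ((q.2)! : ℚ) ≠ 0 := Nat.cast_ne_zero.mpr (Nat.factorial_ne_zero _)
    field_simp
  rw [Finset.sum_congr rfl key, ← Finset.sum_div, ← hcast]
  have h2r : r ≤ 2 * r := by omega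
  rw [show r + r = 2 * r by ring, Nat.cast_choose ℚ h2r, show 2*r - r = r by omega]
  rw [div_div]
  congr 1
  ring

lemma periodCoeff_eq (N : ℕ) : periodCoeff N = ∑ j ∈ Finset.range (N+1), bb N j := by
  unfold periodCoeff
  rw [sum_adt3 (fun a b c => ((2*N)! : ℚ) / ((a ! ^ 2 * b ! ^ 2 * c ! ^ 2 : ℕ) : ℚ)) N]
  have step : ∀ p ∈ Finset.HasAntidiagonal.antidiagonal N,
      (∑ q ∈ Finset.HasAntidiagonal.antidiagonal p.2,
          ((2*N)! : ℚ) / (((p.1)! ^ 2 * (q.1)! ^ 2 * (q.2)! ^ 2 : ℕ) : ℚ))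
        = bb N p.2 := by
    intro p hp
    rw [Finset.HasAntidiagonal.mem_antidiagonal] at hp
    have h1 : ∀ q ∈ Finset.HasAntidiagonal.antidiagonal p.2,
        ((2*N)! : ℚ) / (((p.1)! ^ 2 * (q.1)! ^ 2 * (q.2)! ^ 2 : ℕ) : ℚ)
          = (((2*N)! : ℚ) / ((p.1)! : ℚ)^2) * ((1:ℚ)/((q.1)! ^ 2 * (q.2)! ^ 2)) := by
      intro q _
      push_cast
      ring
    rw [Finset.sum_congr rfl h1, ← Finset.mul_sum, innerSumVdm]
    have hle : p.2 ≤ N := by omega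
    have hsub : N - p.2 = p.1 := by omega
    rw [bb, if_pos hle, hsub]
    push_cast
    ring
  rw [Finset.sum_congr rfl step,
    Finset.Nat.sum_antidiagonal_eq_sum_range_succ (fun a r => bb N r) N]
  have hrefl := Finset.sum_range_reflect (fun j => bb N j) (N+1)
  simp only [Nat.add_sub_cancel] at hrefl
  exact hrefl


/-- `Π(x) = Σ c_N x^N` satisfies the Picard–Fuchs equation
`{θ³ + 36x²(θ+1)(2θ+1)(2θ+3) − 2x(2θ+1)(10θ²+10θ+3)}Π = 0` (`θ = x d/dx`);
equivalently `c₀ = 1`, `c₁ = 6c₀`, and for `N ≥ 2`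
`N³·c_N = 2(2N−1)(10N²−10N+3)·c_{N−1} − 36(N−1)(2N−1)(2N−3)·c_{N−2}`. -/
theorem stmt_13 :
    periodCoeff 0 = 1 ∧ periodCoeff 1 = 6 * periodCoeff 0 ∧
    ∀ N : ℕ, 2 ≤ N →
      (N : ℚ) ^ 3 * periodCoeff N =
        2 * (2 * (N : ℚ) - 1) * (10 * (N : ℚ) ^ 2 - 10 * (N : ℚ) + 3) *
            periodCoeff (N - 1)
          - 36 * ((N : ℚ) - 1) * (2 * (N : ℚ) - 1) * (2 * (N : ℚ) - 3) *
            periodCoeff (N - 2) := by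
  have h0 : periodCoeff 0 = 1 := by
    rw [periodCoeff_eq]
    norm_num [bb, Nat.factorial]
  have h1 : periodCoeff 1 = 6 := by
    rw [periodCoeff_eq]
    rw [Finset.sum_range_succ, Finset.sum_range_one]
    norm_num [bb, Nat.factorial]
  refine ⟨h0, by rw [h1, h0]; norm_num, ?_⟩
  intro N hN
  have hsum := Finset.sum_congr rfl
    (fun j (hj : j ∈ Finset.range (N+1)) => cert N j hN (by
      have := Finset.mem_range.mp hj; omega))
  -- sum of LHS
  have hL : ∑ j ∈ Finset.range (N+1),
      ((N:ℚ)^4 * bb N j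
        - (N:ℚ) * (2*(2*(N:ℚ)-1)*(10*(N:ℚ)^2-10*(N:ℚ)+3)) * bb (N-1) j
        + (N:ℚ) * (36*((N:ℚ)-1)*(2*(N:ℚ)-1)*(2*(N:ℚ)-3)) * bb (N-2) j)
      = (N:ℚ)^4 * periodCoeff N
        - (N:ℚ) * (2*(2*(N:ℚ)-1)*(10*(N:ℚ)^2-10*(N:ℚ)+3)) * periodCoeff (N-1)
        + (N:ℚ) * (36*((N:ℚ)-1)*(2*(N:ℚ)-1)*(2*(N:ℚ)-3)) * periodCoeff (N-2) := by
    have e0 : ∑ j ∈ Finset.range (N+1), bb N j = periodCoeff N :=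
      (periodCoeff_eq N).symm
    have e1 : ∑ j ∈ Finset.range (N+1), bb (N-1) j = periodCoeff (N-1) := by
      rw [periodCoeff_eq, show N + 1 = (N-1) + 1 + 1 by omega, Finset.sum_range_succ,
        bb_of_gt (by omega), add_zero]
    have e2 : ∑ j ∈ Finset.range (N+1), bb (N-2) j = periodCoeff (N-2) := by
      rw [periodCoeff_eq, show N + 1 = (N-2) + 1 + 1 + 1 by omega, Finset.sum_range_succ,
        Finset.sum_range_succ, bb_of_gt (by omega), bb_of_gt (by omega), add_zero, add_zero]
    rw [Finset.sum_add_distrib, Finset.sum_sub_distrib, ← Finset.mul_sum, ← Finset.mul_sum,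
      ← Finset.mul_sum, e0, e1, e2]
  -- sum of RHS telescopes
  have hR : ∑ j ∈ Finset.range (N+1), (gg N (j+1) - gg N j) = 0 := by
    rw [Finset.sum_range_sub (fun j => gg N j) (N+1)]
    rw [gg, gg, bb_of_gt (by omega)]
    norm_num
  rw [hL, hR] at hsum
  have hNq : (N:ℚ) ≠ 0 := by
    have : (0:ℚ) < (N:ℚ) := by exact_mod_cast (show 0 < N by omega)
    exact this.ne'
  apply mul_left_cancel₀ hNq
  linear_combination hsum
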